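/- Let k be a positive integer divisible by 4 with k ≥ 8. Then the 2-color zero-sum generalized Schur number S_{z,2}(k;4) equals 4k - 7. -/

import Mathlib

lemma sumGetD (g : ℕ → ℕ) : ∀ (l : List ℕ) (n : ℕ), l.length ≤ n →
    ∑ i : Fin n, g (l.getD i 1) = (l.map g).sum + (n - l.length) * g 1 := by
  intro l
  induction l with
  | nil => intro n _; simp [mul_comm]
  | cons a l ih =>
    intro n hn
    match n with
    | n + 1 =>
      rw [Fin.sum_univ_succ]
      simp only [Fin.val_zero, List.getD_cons_zero, Fin.val_succ, List.getD_cons_succ]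
      rw [ih n (by simpa using hn)]
      simp only [List.map_cons, List.sum_cons, List.length_cons, Nat.succ_sub_succ]
      ring

lemma build (n t : ℕ) (χ : ℕ → ℕ) (l : List ℕ) (hlen : l.length ≤ n)
    (hmem : ∀ v ∈ l, 1 ≤ v ∧ v ≤ t) (h1t : 1 ≤ t)
    (hz1 : 1 ≤ l.sum + (n - l.length)) (hzt : l.sum + (n - l.length) ≤ t)
    (hcol : ((l.map χ).sum + (n - l.length) * χ 1 + χ (l.sum + (n - l.length))) % 4 = 0) :
    ∃ (y : Fin n → ℕ) (z : ℕ), (∀ i, y i ∈ Finset.Icc 1 t) ∧ z ∈ Finset.Icc 1 t ∧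
      (∑ i, y i) = z ∧ ((∑ i, χ (y i)) + χ z) % 4 = 0 := by
  refine ⟨fun i => l.getD i 1, l.sum + (n - l.length), ?_, ?_, ?_, ?_⟩
  · intro i
    show l.getD (↑i) 1 ∈ Finset.Icc 1 t
    rcases Nat.lt_or_ge (i : ℕ) l.length with hi | hi
    · rw [List.getD_eq_getElem l 1 hi]
      exact Finset.mem_Icc.mpr (hmem _ (List.getElem_mem hi))
    · rw [List.getD_eq_default l 1 hi]
      exact Finset.mem_Icc.mpr ⟨le_refl 1, h1t⟩
  · exact Finset.mem_Icc.mpr ⟨hz1, hzt⟩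
  · have := sumGetD (fun x => x) l n hlen
    simpa [List.map_id'] using this
  · have := sumGetD χ l n hlen
    rw [this]
    exact hcol


lemma main_aux (k : ℕ) (hdvd : 4 ∣ k) (hk : 8 ≤ k) (χ : ℕ → ℕ)
    (hχ : ∀ n ∈ Finset.Icc 1 (4 * k - 7), χ n ≤ 1) (h1 : χ 1 = 0) :
    ∃ (y : Fin (k - 1) → ℕ) (z : ℕ),
      (∀ i, y i ∈ Finset.Icc 1 (4 * k - 7)) ∧ z ∈ Finset.Icc 1 (4 * k - 7) ∧
      (∑ i, y i) = z ∧ ((∑ i, χ (y i)) + χ z) % 4 = 0 := by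
  have hv : ∀ v, 1 ≤ v → v ≤ 4 * k - 7 → χ v = 0 ∨ χ v = 1 := fun v hv1 hv2 => by
    have := hχ v (Finset.mem_Icc.mpr ⟨hv1, hv2⟩); omega
  rcases hv (k - 1) (by omega) (by omega) with hk1 | hk1
  · -- χ(k-1) = 0 : empty list
    refine build (k - 1) (4 * k - 7) χ [] (by simp) (by simp) (by omega) (by simp; omega)
      (by simp; omega) ?_
    have e : ([] : List ℕ).sum + (k - 1 - ([] : List ℕ).length) = k - 1 := by simp
    rw [e]
    simp [h1, hk1]
  · rcases hv (4 * k - 7) (by omega) (by omega) with htop | htop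
    swap
    · -- χ(4k-7) = 1 : three copies of k-1
      refine build (k - 1) (4 * k - 7) χ [k - 1, k - 1, k - 1] (by simp; omega)
        (by intro v hv'; simp at hv'; omega) (by omega) (by simp; omega) (by simp; omega) ?_
      have e : ([k - 1, k - 1, k - 1] : List ℕ).sum + (k - 1 - ([k-1,k-1,k-1] : List ℕ).length)
          = 4 * k - 7 := by simp; omega
      rw [e]
      simp [h1, hk1, htop]
    · rcases hv 2 (by omega) (by omega) with h2 | h2
      · rcases hv 3 (by omega) (by omega) with h3 | h3
        · rcases hv 4 (by omega) (by omega) with h4 | h4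
          · -- all of 2,3,4 colored 0 : (k-2) copies of 4
            refine build (k - 1) (4 * k - 7) χ (List.replicate (k - 2) 4) (by simp; omega)
              (by intro v hv'; simp at hv'; omega) (by omega) (by simp; omega) (by simp; omega) ?_
            have e : (List.replicate (k - 2) 4).sum + (k - 1 - (List.replicate (k - 2) 4).length)
                = 4 * k - 7 := by simp; omega
            rw [e]
            simp [h1, h4, htop]
          · -- χ4 = 1
            rcases hv (k + 8) (by omega) (by omega) with h8 | h8
            · -- χ(k+8)=0 : l = 2 :: replicate 4 3
              refine build (k - 1) (4 * k - 7) χ (2 :: List.replicate 4 3) (by simp; omega)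
                (by intro v hv'; simp at hv'; omega) (by omega) (by simp; omega) (by simp; omega) ?_
              have e : ((2 : ℕ) :: List.replicate 4 3).sum + (k - 1 - ((2:ℕ) :: List.replicate 4 3).length)
                  = k + 8 := by simp; omega
              rw [e]
              simp [h1, h2, h3, h8]
            · refine build (k - 1) (4 * k - 7) χ [4, 4, 4] (by simp; omega)
                (by intro v hv'; simp at hv'; omega) (by omega) (by simp; omega) (by simp; omega) ?_
              have e : ([4, 4, 4] : List ℕ).sum + (k - 1 - ([4,4,4] : List ℕ).length)
                  = k + 8 := by simp; omega
              rw [e]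
              simp [h1, h4, h8]
        · -- χ3 = 1
          rcases hv (k + 5) (by omega) (by omega) with h5 | h5
          · refine build (k - 1) (4 * k - 7) χ (List.replicate 6 2) (by simp; omega)
              (by intro v hv'; simp at hv'; omega) (by omega) (by simp; omega) (by simp; omega) ?_
            have e : (List.replicate 6 2).sum + (k - 1 - (List.replicate 6 2).length)
                = k + 5 := by simp; omega
            rw [e]
            simp [h1, h2, h5]
          · refine build (k - 1) (4 * k - 7) χ [3, 3, 3] (by simp; omega)
              (by intro v hv'; simp at hv'; omega) (by omega) (by simp; omega) (by simp; omega) ?_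
            have e : ([3, 3, 3] : List ℕ).sum + (k - 1 - ([3,3,3] : List ℕ).length)
                = k + 5 := by simp; omega
            rw [e]
            simp [h1, h3, h5]
      · -- χ2 = 1
        rcases hv (k + 2) (by omega) (by omega) with hq | hq
        · -- χ(k+2)=0 : l = replicate (k-5) 2 ++ [k-1, k+2]
          refine build (k - 1) (4 * k - 7) χ (List.replicate (k - 5) 2 ++ [k - 1, k + 2])
            (by simp; omega) (by intro v hv'; simp at hv'; omega) (by omega)
            (by simp; omega) (by simp; omega) ?_
          have e : (List.replicate (k - 5) 2 ++ [k - 1, k + 2]).sum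
              + (k - 1 - (List.replicate (k - 5) 2 ++ [k - 1, k + 2]).length) = 4 * k - 7 := by
            simp; omega
          rw [e]
          simp [h1, h2, hk1, hq, htop]
          omega
        · refine build (k - 1) (4 * k - 7) χ [2, 2, 2] (by simp; omega)
            (by intro v hv'; simp at hv'; omega) (by omega) (by simp; omega) (by simp; omega) ?_
          have e : ([2, 2, 2] : List ℕ).sum + (k - 1 - ([2,2,2] : List ℕ).length)
              = k + 2 := by simp; omega
          rw [e]
          simp [h1, h2, hq]


theorem stmt10 (k : ℕ) (hdvd : 4 ∣ k) (hk : 8 ≤ k) :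
    IsLeast {t : ℕ | 0 < t ∧ ∀ χ : ℕ → ℕ, (∀ n ∈ Finset.Icc 1 t, χ n ≤ 1) →
      ∃ (y : Fin (k - 1) → ℕ) (z : ℕ),
      (∀ i, y i ∈ Finset.Icc 1 (t)) ∧ z ∈ Finset.Icc 1 (t) ∧
      (∑ i, y i) = z ∧ ((∑ i, χ (y i)) + χ z) % 4 = 0}
    (4 * k - 7) := by
  constructor
  · refine ⟨by omega, fun χ hχ => ?_⟩
    have h1 : χ 1 ≤ 1 := hχ 1 (Finset.mem_Icc.mpr ⟨le_refl 1, by omega⟩)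
    rcases Nat.eq_zero_or_pos (χ 1) with h10 | h11
    · exact main_aux k hdvd hk χ hχ h10
    · -- swap colors
      obtain ⟨y, z, hy, hz, hsum, hcol⟩ := main_aux k hdvd hk (fun n => 1 - χ n)
        (fun n _ => Nat.sub_le 1 (χ n)) (by omega)
      refine ⟨y, z, hy, hz, hsum, ?_⟩
      have hyy : ∀ i, χ (y i) + (1 - χ (y i)) = 1 := fun i => by
        have := hχ (y i) (hy i); omega
      have hzz : χ z + (1 - χ z) = 1 := by have := hχ z hz; omega
      have hS : (∑ i, χ (y i)) + (∑ i, (1 - χ (y i))) = k - 1 := by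
        rw [← Finset.sum_add_distrib]
        simp [hyy]
      omega
  · rintro t ⟨htpos, hprop⟩
    by_contra hlt
    push_neg at hlt
    obtain ⟨y, z, hy, hz, hsum, hcol⟩ := hprop (fun n => if k - 1 ≤ n then 1 else 0)
      (fun n _ => by split <;> omega)
    have hz' := Finset.mem_Icc.mp hz
    have hy' : ∀ i, 1 ≤ y i ∧ y i ≤ t := fun i => Finset.mem_Icc.mp (hy i)
    have hzk : k - 1 ≤ z := by
      rw [← hsum]
      calc (k - 1) = ∑ _i : Fin (k - 1), 1 := by simp
      _ ≤ ∑ i, y i := Finset.sum_le_sum (fun i _ => (hy' i).1)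
    set S := ∑ i, (if k - 1 ≤ y i then 1 else 0) with hSdef
    have hSz : (k - 1) + S * (k - 2) ≤ z := by
      rw [← hsum]
      have hpt : ∀ i ∈ Finset.univ, 1 + (if k - 1 ≤ y i then 1 else 0) * (k - 2) ≤ y i := by
        intro i _
        by_cases h : k - 1 ≤ y i
        · simp [h]; omega
        · simp [h]; exact (hy' i).1
      calc (k - 1) + S * (k - 2) = ∑ i : Fin (k - 1), (1 + (if k - 1 ≤ y i then 1 else 0) * (k - 2)) := by
            rw [Finset.sum_add_distrib, ← Finset.sum_mul, ← hSdef]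
            simp
      _ ≤ ∑ i, y i := Finset.sum_le_sum hpt
    have hS2 : S ≤ 2 := by
      by_contra hS3
      push_neg at hS3
      have : 3 * (k - 2) ≤ S * (k - 2) := Nat.mul_le_mul_right _ (by omega)
      omega
    have hχz : (if k - 1 ≤ z then (1:ℕ) else 0) = 1 := if_pos hzk
    omega
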